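/- arXiv:2006.04571 — 4 statements merged into one kernel-verified Lean document; each statement's English description precedes it below -/
import Mathlib

section
/- For every real symmetric n×n matrix L and every k with 2 ≤ k ≤ n, the k-th level exact subgraph Max-Cut bound satisfies z^k_mc ≤ z^{k-1}_mc, where z^k_mc = sup{⟨L,X⟩ : X ∈ X^E and X_I ∈ CUT_k for every I ⊆ {1,…,n} with |I| = k}. -/
open Matrix BigOperators

noncomputable section

/-- Frobenius inner product `⟨A,B⟩ = trace(AB)`. -/
def frob {n : ℕ} (A B : Matrix (Fin n) (Fin n) ℝ) : ℝ := (A * B).trace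

/-- `c` is a ±1 vector. -/
def isPM1 {n : ℕ} (c : Fin n → ℝ) : Prop := ∀ i, c i = 1 ∨ c i = -1

/-- The cut polytope: convex hull of the cut matrices `c cᵀ` with `c ∈ {-1,1}ⁿ`. -/
def CUT (n : ℕ) : Set (Matrix (Fin n) (Fin n) ℝ) :=
  convexHull ℝ {M | ∃ c : Fin n → ℝ, isPM1 c ∧ M = Matrix.vecMulVec c c}

/-- The spectrahedron `X^E`: matrices with unit diagonal that are positive semidefinite. -/
def XE (n : ℕ) : Set (Matrix (Fin n) (Fin n) ℝ) :=
  {X | (∀ i, X i i = 1) ∧ X.PosSemidef}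

/-- The `k`-th level exact subgraph Max-Cut bound: subsets `I` of cardinality `k`
are represented by injective maps `f : Fin k → Fin n`. -/
def zLevel (n : ℕ) (L : Matrix (Fin n) (Fin n) ℝ) (k : ℕ) : ℝ :=
  sSup {z : ℝ | ∃ X ∈ XE n,
    (∀ f : Fin k → Fin n, Function.Injective f → X.submatrix f f ∈ CUT k) ∧ z = frob L X}

/-- Entries of a PSD matrix with unit diagonal lie in `[-1,1]`. -/
lemma entry_abs_le {n : ℕ} {X : Matrix (Fin n) (Fin n) ℝ} (hX : X.PosSemidef)
    (hd : ∀ i, X i i = 1) (i j : Fin n) : |X i j| ≤ 1 := by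
  rcases eq_or_ne i j with rfl | hij
  · simp [hd]
  · have hsym : X j i = X i j := by
      have := hX.1; rw [Matrix.IsHermitian] at this
      calc X j i = Xᴴ i j := by simp [conjTranspose_apply]
        _ = X i j := by rw [this]
    rw [abs_le]
    constructor
    · have h := hX.dotProduct_mulVec_nonneg (Pi.single i 1 + Pi.single j 1)
      simp [mulVec_add, dotProduct_add, add_dotProduct, Matrix.mulVec_single,
        single_dotProduct, dotProduct_single, hd, hsym, hij, Pi.single_apply] at h
      linarith
    · have h := hX.dotProduct_mulVec_nonneg (Pi.single i 1 + Pi.single j (-1))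
      simp [mulVec_add, dotProduct_add, add_dotProduct, Matrix.mulVec_single,
        single_dotProduct, dotProduct_single, hd, hsym, hij, Pi.single_apply] at h
      linarith

/-- Principal (or any) submatrices of matrices in the cut polytope are in the cut polytope. -/
lemma submatrix_mem_CUT {k m : ℕ} (h : Fin m → Fin k) {Y : Matrix (Fin k) (Fin k) ℝ}
    (hY : Y ∈ CUT k) : Y.submatrix h h ∈ CUT m := by
  have hlin : IsLinearMap ℝ (fun Y : Matrix (Fin k) (Fin k) ℝ => Y.submatrix h h) :=
    ⟨fun A B => rfl, fun c A => rfl⟩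
  have himg := hlin.image_convexHull {M | ∃ c : Fin k → ℝ, isPM1 c ∧ M = Matrix.vecMulVec c c}
  have hmem : Y.submatrix h h ∈
      (fun Y : Matrix (Fin k) (Fin k) ℝ => Y.submatrix h h) '' (CUT k) :=
    Set.mem_image_of_mem _ hY
  rw [CUT, himg] at hmem
  refine convexHull_mono ?_ hmem
  rintro M ⟨N, ⟨c, hc, rfl⟩, rfl⟩
  exact ⟨c ∘ h, fun i => hc (h i), by ext i j; simp [vecMulVec]⟩

/-- The all-ones matrix is positive semidefinite. -/
lemma allOnes_posSemidef {n : ℕ} :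
    (Matrix.vecMulVec (fun _ : Fin n => (1:ℝ)) fun _ => 1).PosSemidef := by
  refine Matrix.PosSemidef.of_dotProduct_mulVec_nonneg ?_ ?_
  · ext i j; simp [vecMulVec, conjTranspose_apply]
  · intro x
    have : (Matrix.vecMulVec (fun _ : Fin n => (1:ℝ)) fun _ => 1) *ᵥ x =
        fun _ => ∑ j, x j := by
      ext i; simp [mulVec, dotProduct, vecMulVec]
    rw [this]
    show (0:ℝ) ≤ star x ⬝ᵥ fun _ => ∑ j, x j
    simp [dotProduct, ← Finset.sum_mul]
    exact mul_self_nonneg _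

/-- The level-`k` feasible value set is nonempty. -/
lemma zSet_nonempty (n : ℕ) (L : Matrix (Fin n) (Fin n) ℝ) (k : ℕ) :
    {z : ℝ | ∃ X ∈ XE n,
      (∀ f : Fin k → Fin n, Function.Injective f → X.submatrix f f ∈ CUT k) ∧
        z = frob L X}.Nonempty := by
  set J : Matrix (Fin n) (Fin n) ℝ := Matrix.vecMulVec (fun _ => 1) fun _ => 1 with hJ
  refine ⟨frob L J, J, ⟨fun i => by simp [hJ, vecMulVec], allOnes_posSemidef⟩, ?_, rfl⟩
  intro f _
  have : J.submatrix f f = Matrix.vecMulVec (fun _ : Fin k => (1:ℝ)) fun _ => 1 := by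
    ext i j; simp [hJ, vecMulVec]
  rw [this]
  exact subset_convexHull ℝ _ ⟨fun _ => 1, fun i => Or.inl rfl, rfl⟩

/-- The level-`k` feasible value set is bounded above. -/
lemma zSet_bddAbove (n : ℕ) (L : Matrix (Fin n) (Fin n) ℝ) (k : ℕ) :
    BddAbove {z : ℝ | ∃ X ∈ XE n,
      (∀ f : Fin k → Fin n, Function.Injective f → X.submatrix f f ∈ CUT k) ∧
        z = frob L X} := by
  refine ⟨∑ i, ∑ j, |L i j|, ?_⟩
  rintro z ⟨X, ⟨hd, hpsd⟩, -, rfl⟩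
  have htr : frob L X = ∑ i, ∑ j, L i j * X j i := by
    simp [frob, Matrix.trace, Matrix.diag, Matrix.mul_apply]
  rw [htr]
  refine Finset.sum_le_sum fun i _ => Finset.sum_le_sum fun j _ => ?_
  calc L i j * X j i ≤ |L i j * X j i| := le_abs_self _
    _ = |L i j| * |X j i| := abs_mul _ _
    _ ≤ |L i j| * 1 := mul_le_mul_of_nonneg_left (entry_abs_le hpsd hd j i) (abs_nonneg _)
    _ = |L i j| := mul_one _

theorem esh_maxcut_monotone (n k : ℕ) (hk2 : 2 ≤ k) (hkn : k ≤ n)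
    (L : Matrix (Fin n) (Fin n) ℝ) (hL : L.IsSymm) :
    zLevel n L k ≤ zLevel n L (k - 1) := by
  obtain ⟨m, rfl⟩ : ∃ m, k = m + 1 := ⟨k - 1, (Nat.succ_pred_eq_of_pos (by omega)).symm⟩
  simp only [Nat.add_sub_cancel]
  unfold zLevel
  refine csSup_le_csSup (zSet_bddAbove n L m) (zSet_nonempty n L (m + 1)) ?_
  rintro z ⟨X, hXE, hcut, rfl⟩
  refine ⟨X, hXE, ?_, rfl⟩
  intro g hg
  obtain ⟨a, ha⟩ : ∃ a : Fin n, ∀ i, g i ≠ a := by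
    by_contra hcon
    push_neg at hcon
    have hsub : (Finset.univ : Finset (Fin n)) ⊆ Finset.univ.image g := by
      intro a _
      obtain ⟨i, hi⟩ := hcon a
      exact Finset.mem_image.2 ⟨i, Finset.mem_univ i, hi⟩
    have := Finset.card_le_card hsub
    rw [Finset.card_image_of_injective _ hg] at this
    simp at this
    omega
  have hf : Function.Injective (Fin.snoc g a : Fin (m + 1) → Fin n) := by
    intro i j hij
    induction i using Fin.lastCases with
    | last =>
      induction j using Fin.lastCases with
      | last => rfl
      | cast j =>
        rw [Fin.snoc_last, Fin.snoc_castSucc] at hij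
        exact absurd hij.symm (ha j)
    | cast i =>
      induction j using Fin.lastCases with
      | last =>
        rw [Fin.snoc_last, Fin.snoc_castSucc] at hij
        exact absurd hij (ha i)
      | cast j =>
        rw [Fin.snoc_castSucc, Fin.snoc_castSucc] at hij
        exact congrArg Fin.castSucc (hg hij)
  have hmem := hcut (Fin.snoc g a) hf
  have heq : (X.submatrix (Fin.snoc g a) (Fin.snoc g a)).submatrix
      (Fin.castSucc : Fin m → Fin (m + 1)) Fin.castSucc = X.submatrix g g := by
    ext i j
    simp [Matrix.submatrix_apply, Fin.snoc_castSucc]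
  rw [← heq]
  exact submatrix_mem_CUT _ hmem

end
end

section
/- For every finite simple graph G on vertex set {1,…,n}, the Lovász theta function bounds the stability number: α(G) ≤ ϑ(G), where ϑ(G) = sup{trace(X) : X ∈ X^S(G)}. -/
open Matrix BigOperators

noncomputable section

/-- Bordered matrix `[[t, xᵀ],[x, X]]` indexed by `Unit ⊕ Fin n`. -/
def border {n : ℕ} (t : ℝ) (x : Fin n → ℝ) (X : Matrix (Fin n) (Fin n) ℝ) :
    Matrix (Unit ⊕ Fin n) (Unit ⊕ Fin n) ℝ :=
  Matrix.fromBlocks (fun _ _ => t) (fun _ j => x j) (fun i _ => x i) X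

/-- The theta body of `G`. -/
def thetaBody {n : ℕ} (G : SimpleGraph (Fin n)) : Set (Matrix (Fin n) (Fin n) ℝ) :=
  {X | (∀ i j, G.Adj i j → X i j = 0) ∧ (border 1 X.diag X).PosSemidef}

/-- The stability (independence) number: largest cardinality of a stable set. -/
def indepNum {V : Type*} (G : SimpleGraph V) : ℕ :=
  sSup {k | ∃ S : Finset V, (∀ u ∈ S, ∀ v ∈ S, ¬ G.Adj u v) ∧ S.card = k}

/-- Diagonal entries of a theta-body member are at most 1. -/
lemma diag_le_one_of_mem {n : ℕ} {G : SimpleGraph (Fin n)}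
    {X : Matrix (Fin n) (Fin n) ℝ} (hX : X ∈ thetaBody G) (i : Fin n) :
    0 ≤ X i i ∧ X i i ≤ 1 := by
  obtain ⟨-, hpsd⟩ := hX
  set t := X i i with ht
  have key : ∀ a b : ℝ, 0 ≤ a ^ 2 + 2 * a * b * t + b ^ 2 * t := by
    intro a b
    have h := hpsd.dotProduct_mulVec_nonneg (Sum.elim (fun _ => a) (fun j => if j = i then b else 0))
    have : star (Sum.elim (fun _ => a) (fun j => if j = i then b else 0) :
        Unit ⊕ Fin n → ℝ) ⬝ᵥ
        (border 1 X.diag X) *ᵥ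
          (Sum.elim (fun _ => a) (fun j => if j = i then b else 0)) =
        a ^ 2 + 2 * a * b * t + b ^ 2 * t := by
      simp only [star_trivial, dotProduct, mulVec, Fintype.sum_sum_type,
        border, fromBlocks, of_apply, fromBlocks_apply₁₁, fromBlocks_apply₁₂, fromBlocks_apply₂₁,
        fromBlocks_apply₂₂, Sum.elim_inl, Sum.elim_inr, Finset.univ_unique,
        Finset.sum_singleton, Matrix.diag, mul_ite, mul_zero, ite_mul, zero_mul]
      simp only [Finset.sum_ite_eq', Finset.mem_univ, if_true]
      ring
    rw [this] at h
    exact h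
  have h0 : 0 ≤ t := by have := key 0 1; nlinarith
  have h1 : 0 ≤ t - t ^ 2 := by have := key t (-1); nlinarith
  exact ⟨h0, by nlinarith⟩

theorem indepNum_bddAbove {n : ℕ} (G : SimpleGraph (Fin n)) :
    BddAbove {k | ∃ S : Finset (Fin n), (∀ u ∈ S, ∀ v ∈ S, ¬ G.Adj u v) ∧ S.card = k} := by
  refine ⟨n, fun k hk => ?_⟩
  obtain ⟨S, -, rfl⟩ := hk
  simpa using S.card_le_univ.trans_eq (by simp)

/-- `α(G) ≤ ϑ(G)`, the Lovász theta function. -/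
theorem indepNum_le_theta (n : ℕ) (G : SimpleGraph (Fin n)) :
    (indepNum G : ℝ) ≤ sSup {z : ℝ | ∃ X ∈ thetaBody G, z = X.trace} := by
  classical
  -- obtain a stable set of maximal size
  have hne : {k | ∃ S : Finset (Fin n), (∀ u ∈ S, ∀ v ∈ S, ¬ G.Adj u v) ∧ S.card = k}.Nonempty :=
    ⟨0, ∅, by simp, by simp⟩
  obtain ⟨S, hS, hScard⟩ :=
    Nat.sSup_mem hne (indepNum_bddAbove G)
  -- the rank-one certificate
  set v : Fin n → ℝ := fun i => if i ∈ S then 1 else 0 with hv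
  set X : Matrix (Fin n) (Fin n) ℝ := fun i j => v i * v j with hXdef
  have hvsq : ∀ i, v i * v i = v i := by intro i; by_cases h : i ∈ S <;> simp [hv, h]
  have hdiag : X.diag = v := by funext i; simp [Matrix.diag, hXdef, hvsq]
  have hmem : X ∈ thetaBody G := by
    constructor
    · intro i j hij
      have hi : v i * v j = 0 := by
        by_cases h1 : i ∈ S
        · by_cases h2 : j ∈ S
          · exact absurd hij (hS i h1 j h2)
          · simp [hv, h2]
        · simp [hv, h1]
      simpa [hXdef] using hi
    · rw [hdiag]
      set w : Unit ⊕ Fin n → ℝ := Sum.elim (fun _ => 1) v with hw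
      refine posSemidef_iff_dotProduct_mulVec.mpr ⟨?_, ?_⟩
      · unfold Matrix.IsHermitian
        ext p q
        rcases p with p | p <;> rcases q with q | q <;>
          simp [border, fromBlocks, Matrix.conjTranspose_apply, hXdef, mul_comm]
      · intro y
        have hform : star y ⬝ᵥ (border 1 v X) *ᵥ y =
            (y (Sum.inl ()) + ∑ i, v i * y (Sum.inr i)) ^ 2 := by
          simp only [star_trivial, dotProduct, mulVec, Fintype.sum_sum_type,
            border, fromBlocks, of_apply, fromBlocks_apply₁₁, fromBlocks_apply₁₂, fromBlocks_apply₂₁,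
            fromBlocks_apply₂₂, Sum.elim_inl, Sum.elim_inr, dotProduct,
            Finset.univ_unique, Finset.sum_singleton, hXdef]
          have : ∀ i, (∑ j, v i * v j * y (Sum.inr j)) =
              v i * ∑ j, v j * y (Sum.inr j) := by
            intro i; rw [Finset.mul_sum]; congr 1; funext j; ring
          simp only [this]
          have h1 : ∑ x, y (Sum.inr x) *
              (v x * y (Sum.inl default) + v x * ∑ j, v j * y (Sum.inr j)) =
              (∑ x, v x * y (Sum.inr x)) *
              (y (Sum.inl default) + ∑ j, v j * y (Sum.inr j)) := by
            rw [Finset.sum_mul]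
            exact Finset.sum_congr rfl fun x _ => by ring
          rw [h1]
          ring
        rw [hform]
        positivity
  -- trace of the certificate
  have htrace : X.trace = (S.card : ℝ) := by
    rw [Matrix.trace]
    have : ∀ i, X.diag i = if i ∈ S then (1:ℝ) else 0 := by
      intro i; rw [hdiag]
    simp only [this]
    rw [Finset.sum_ite_mem, Finset.univ_inter, Finset.sum_const, nsmul_eq_mul, mul_one]
  -- bounded above
  have hbdd : BddAbove {z : ℝ | ∃ X ∈ thetaBody G, z = X.trace} := by
    refine ⟨n, fun z hz => ?_⟩
    obtain ⟨Y, hY, rfl⟩ := hz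
    calc Y.trace = ∑ i, Y i i := by rw [Matrix.trace]; rfl
    _ ≤ ∑ _i : Fin n, (1 : ℝ) :=
        Finset.sum_le_sum fun i _ => (diag_le_one_of_mem hY i).2
    _ = n := by simp
  have hmem' : (S.card : ℝ) ∈ {z : ℝ | ∃ X ∈ thetaBody G, z = X.trace} :=
    ⟨X, hmem, htrace.symm⟩
  have hind : indepNum G = S.card := by rw [indepNum]; exact hScard.symm
  calc (indepNum G : ℝ) = (S.card : ℝ) := by rw [hind]
  _ ≤ _ := le_csSup hbdd hmem'

end
end

section
/- For every finite simple graph G on vertex set {1,…,n}, the SDP value t*(G) = inf{t : [[t, 1^T],[1, X]] is positive semidefinite, all diagonal entries of X equal 1, and X_{ij} = 0 for all edges {i,j} of G} satisfies t*(G) ≤ χ(G), the chromatic number of G. -/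
open Matrix BigOperators

noncomputable section

/-- `s` is a 0/1 vector whose support is a stable set of `G`. -/
def isStableVec {n : ℕ} (G : SimpleGraph (Fin n)) (s : Fin n → ℝ) : Prop :=
  (∀ i, s i = 0 ∨ s i = 1) ∧ ∀ i j, G.Adj i j → s i * s j = 0

/-- `s` lists the columns of a stable-set partition matrix of `G`. -/
def isSSPM {n k : ℕ} (G : SimpleGraph (Fin n)) (s : Fin k → Fin n → ℝ) : Prop :=
  (∀ i, isStableVec G (s i)) ∧ ∀ v, ∃! i, s i v = 1

/-- The chromatic number: smallest number of stable sets partitioning the vertex set. -/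
def chrNum {n : ℕ} (G : SimpleGraph (Fin n)) : ℕ :=
  sInf {k | ∃ s : Fin k → Fin n → ℝ, isSSPM G s}

lemma sspm_exists {n : ℕ} (G : SimpleGraph (Fin n)) :
    ∃ s : Fin n → Fin n → ℝ, isSSPM G s := by
  refine ⟨fun i v => if v = i then 1 else 0, ⟨fun i => ⟨fun v => ?_, fun a b hab => ?_⟩, fun v => ?_⟩⟩
  · by_cases h : v = i <;> simp [h]
  · by_cases ha : a = i
    · have hb : b ≠ i := fun h => hab.ne (by rw [ha, h])
      simp [hb]
    · simp [ha]
  · refine ⟨v, by simp, fun j hj => ?_⟩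
    by_contra h
    simp only at hj
    rw [if_neg (fun hvj : v = j => h hvj.symm)] at hj
    exact zero_ne_one hj

lemma sum_eq_one {k : ℕ} (f : Fin k → ℝ) (h01 : ∀ c, f c = 0 ∨ f c = 1)
    (h : ∃! c, f c = 1) : ∑ c, f c = 1 := by
  obtain ⟨c0, hc0, hun⟩ := h
  rw [Finset.sum_eq_single c0]
  · exact hc0
  · intro b _ hb
    rcases h01 b with h | h
    · exact h
    · exact absurd (hun b h) hb
  · simp

/-- The SDP value `t*(G)` is at most the chromatic number `χ(G)`. -/
theorem tstar_le_chromatic (n : ℕ) (G : SimpleGraph (Fin n)) :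
    sInf {t : ℝ | ∃ X : Matrix (Fin n) (Fin n) ℝ,
        (border t (fun _ => 1) X).PosSemidef ∧ (∀ i, X i i = 1) ∧
        ∀ i j, G.Adj i j → X i j = 0}
      ≤ (chrNum G : ℝ) := by
  have hne : {k | ∃ s : Fin k → Fin n → ℝ, isSSPM G s}.Nonempty := ⟨n, sspm_exists G⟩
  obtain ⟨s, hs⟩ : chrNum G ∈ {k | ∃ s : Fin k → Fin n → ℝ, isSSPM G s} := Nat.sInf_mem hne
  generalize hk : chrNum G = k at s hs ⊢
  -- bdd below
  have hbdd : BddBelow {t : ℝ | ∃ X : Matrix (Fin n) (Fin n) ℝ,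
        (border t (fun _ => 1) X).PosSemidef ∧ (∀ i, X i i = 1) ∧
        ∀ i j, G.Adj i j → X i j = 0} := by
    refine ⟨0, fun t ht => ?_⟩
    obtain ⟨X, hpsd, -, -⟩ := ht
    have := hpsd.diag_nonneg (i := Sum.inl ())
    simpa [mulVec, dotProduct, border, Matrix.fromBlocks, Fintype.sum_sum_type] using this
  refine csInf_le hbdd ?_
  -- construct X
  set X : Matrix (Fin n) (Fin n) ℝ := fun i j => ∑ c, s c i * s c j with hX
  set A : Matrix (Unit ⊕ Fin n) (Fin k) ℝ :=
    Matrix.of fun p c => Sum.elim (fun _ => 1) (fun i => s c i) p with hA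
  have hsum1 : ∀ v, ∑ c, s c v = 1 := fun v =>
    sum_eq_one _ (fun c => (hs.1 c).1 v) (hs.2 v)
  have hborder : border (k : ℝ) (fun _ => 1) X = A * Aᵀ := by
    ext p q
    cases p <;> cases q <;>
      simp only [hA, hX, border, Matrix.mul_apply, Matrix.transpose_apply,
        Matrix.fromBlocks, Matrix.of_apply, Sum.elim_inl, Sum.elim_inr,
        mul_one, one_mul]
    · simp
    · exact (hsum1 _).symm
    · exact (hsum1 _).symm
  refine ⟨X, ?_, ?_, ?_⟩
  · rw [hborder]
    simpa using Matrix.posSemidef_self_mul_conjTranspose A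
  · intro i
    have : ∀ c, s c i * s c i = s c i := by
      intro c; rcases (hs.1 c).1 i with h | h <;> simp [h]
    simp only [hX]
    rw [Finset.sum_congr rfl (fun c _ => this c)]
    exact hsum1 i
  · intro i j hij
    simp only [hX]
    exact Finset.sum_eq_zero fun c _ => (hs.1 c).2 i j hij


end
end

section
/- For every integer t ≥ 1, the independence number of the two-dimensional torus graph satisfies α(T_{2t+1}) = t(2t+1) when the side length d = 2t+1 is odd, and α(T_{2t}) = 2t² when the side length d = 2t is even. -/
open BigOperators

noncomputable section

/-- The two-dimensional torus graph `T_d` on vertex set `(ℤ/dℤ) × (ℤ/dℤ)`: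
each vertex `(i,j)` is adjacent to `(i+1,j)` and `(i,j+1)` (indices mod `d`). -/
def torus (d : ℕ) : SimpleGraph (ZMod d × ZMod d) where
  Adj u v := u ≠ v ∧
    ((v.1 = u.1 + 1 ∧ v.2 = u.2) ∨ (v.1 = u.1 ∧ v.2 = u.2 + 1) ∨
     (u.1 = v.1 + 1 ∧ u.2 = v.2) ∨ (u.1 = v.1 ∧ u.2 = v.2 + 1))
  symm := by
    constructor
    intro u v h
    exact ⟨h.1.symm, by tauto⟩
  loopless := by
    constructor
    intro u h
    exact h.1 rfl

/-- Upper bound: any independent set in `T_d` has at most `d * (d/2)` vertices. -/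
lemma torus_indep_card_le (d : ℕ) (hd : 2 ≤ d) (S : Finset (ZMod d × ZMod d))
    (hS : ∀ u ∈ S, ∀ v ∈ S, ¬ (torus d).Adj u v) : S.card ≤ d * (d / 2) := by
  classical
  haveI : NeZero d := ⟨by omega⟩
  haveI : Fact (1 < d) := ⟨hd⟩
  rw [Finset.card_eq_sum_card_fiberwise (f := Prod.fst) (t := Finset.univ)
    (fun x _ => Finset.mem_univ _)]
  have hbound : ∀ i : ZMod d, (S.filter (fun p => p.1 = i)).card ≤ d / 2 := by
    intro i
    set B : Finset (ZMod d) := (S.filter (fun p => p.1 = i)).image Prod.snd with hB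
    have hmemB : ∀ j ∈ B, (i, j) ∈ S := by
      intro j hj
      rw [hB, Finset.mem_image] at hj
      obtain ⟨p, hp, hpj⟩ := hj
      rw [Finset.mem_filter] at hp
      have : p = (i, j) := Prod.ext hp.2 hpj
      exact this ▸ hp.1
    have hcard : (S.filter (fun p => p.1 = i)).card = B.card := by
      rw [hB]
      rw [Finset.card_image_of_injOn]
      intro p hp q hq hpq
      simp only [Finset.mem_coe, Finset.mem_filter] at hp hq
      exact Prod.ext (hp.2.trans hq.2.symm) hpq
    have hconsec : ∀ j ∈ B, j + 1 ∉ B := by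
      intro j hj hj1
      refine hS (i, j) (hmemB j hj) (i, j + 1) (hmemB _ hj1) ?_
      refine ⟨?_, Or.inr (Or.inl ⟨rfl, rfl⟩)⟩
      intro h
      have : j = j + 1 := congrArg Prod.snd h
      have : (1 : ZMod d) = 0 := by
        have := this.symm
        linear_combination this
      exact one_ne_zero this
    have hdisj : Disjoint B (B.image (· + 1)) := by
      rw [Finset.disjoint_left]
      intro a ha ha'
      rw [Finset.mem_image] at ha'
      obtain ⟨b, hb, rfl⟩ := ha'
      exact hconsec b hb ha
    have himg : (B.image (· + 1)).card = B.card :=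
      Finset.card_image_of_injective _ (add_left_injective 1)
    have hle : (B ∪ B.image (· + 1)).card ≤ d := by
      calc (B ∪ B.image (· + 1)).card ≤ (Finset.univ : Finset (ZMod d)).card :=
            Finset.card_le_card (Finset.subset_univ _)
        _ = d := by rw [Finset.card_univ, ZMod.card]
    rw [Finset.card_union_of_disjoint hdisj, himg] at hle
    omega
  calc ∑ i : ZMod d, (S.filter (fun p => p.1 = i)).card
      ≤ ∑ _i : ZMod d, d / 2 := Finset.sum_le_sum (fun i _ => hbound i)
    _ = d * (d / 2) := by
        rw [Finset.sum_const, Finset.card_univ, ZMod.card, smul_eq_mul]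

/-- Lower bound: an explicit independent set in `T_d` of size `d * (d/2)`. -/
lemma torus_exists_indep (d : ℕ) (hd : 2 ≤ d) :
    ∃ S : Finset (ZMod d × ZMod d),
      (∀ u ∈ S, ∀ v ∈ S, ¬ (torus d).Adj u v) ∧ S.card = d * (d / 2) := by
  classical
  haveI : NeZero d := ⟨by omega⟩
  set t := d / 2 with ht
  have h2t : 2 * t ≤ d := by omega
  set A : Finset (ZMod d) := (Finset.range t).image (fun k => ((2 * k : ℕ) : ZMod d)) with hA
  have key : ∀ a ∈ A, a + 1 ∉ A := by
    intro a ha hb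
    rw [hA, Finset.mem_image] at ha hb
    obtain ⟨k, hk, rfl⟩ := ha
    obtain ⟨k', hk', he⟩ := hb
    rw [Finset.mem_range] at hk hk'
    have h1 : ((2 * k + 1 : ℕ) : ZMod d) = ((2 * k' : ℕ) : ZMod d) := by
      push_cast at he ⊢
      linear_combination -he
    have h2 := congrArg ZMod.val h1
    rw [ZMod.val_cast_of_lt (by omega), ZMod.val_cast_of_lt (by omega)] at h2
    omega
  set S := Finset.univ.filter (fun p : ZMod d × ZMod d => p.1 + p.2 ∈ A) with hSdef
  have hmemS : ∀ p : ZMod d × ZMod d, p ∈ S ↔ p.1 + p.2 ∈ A := by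
    intro p; rw [hSdef, Finset.mem_filter]; simp
  refine ⟨S, ?_, ?_⟩
  · intro u hu v hv hadj
    rw [hmemS] at hu hv
    obtain ⟨hne, h⟩ := hadj
    rcases h with ⟨h1, h2⟩ | ⟨h1, h2⟩ | ⟨h1, h2⟩ | ⟨h1, h2⟩
    · refine key _ hu ?_
      have : v.1 + v.2 = u.1 + u.2 + 1 := by rw [h1, h2]; ring
      rwa [this] at hv
    · refine key _ hu ?_
      have : v.1 + v.2 = u.1 + u.2 + 1 := by rw [h1, h2]; ring
      rwa [this] at hv
    · refine key _ hv ?_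
      have : u.1 + u.2 = v.1 + v.2 + 1 := by rw [h1, h2]; ring
      rwa [this] at hu
    · refine key _ hv ?_
      have : u.1 + u.2 = v.1 + v.2 + 1 := by rw [h1, h2]; ring
      rwa [this] at hu
  · have hcardA : A.card = t := by
      rw [hA, Finset.card_image_of_injOn, Finset.card_range]
      intro k hk k' hk' hkk'
      simp only [Finset.mem_coe, Finset.mem_range] at hk hk'
      have h2 := congrArg ZMod.val hkk'
      rw [ZMod.val_cast_of_lt (by omega), ZMod.val_cast_of_lt (by omega)] at h2
      omega
    have := Finset.card_nbij' (s := S) (t := Finset.univ ×ˢ A)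
      (i := fun p => (p.1, p.1 + p.2)) (j := fun q => (q.1, q.2 - q.1))
      (fun p hp => by
        rw [Finset.mem_coe, Finset.mem_product]
        exact ⟨Finset.mem_univ _, (hmemS p).1 hp⟩)
      (fun q hq => by
        rw [Finset.mem_coe, Finset.mem_product] at hq
        rw [Finset.mem_coe, hmemS]
        simpa using hq.2)
      (fun p hp => by simp)
      (fun q hq => by simp)
    rw [this, Finset.card_product, Finset.card_univ, ZMod.card, hcardA]

lemma indepNum_torus_eq (d : ℕ) (hd : 2 ≤ d) : indepNum (torus d) = d * (d / 2) := by
  obtain ⟨S, hS, hcard⟩ := torus_exists_indep d hd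
  refine le_antisymm ?_ ?_
  · refine csSup_le ⟨0, ∅, by simp⟩ ?_
    rintro k ⟨T, hT, rfl⟩
    exact torus_indep_card_le d hd T hT
  · refine le_csSup ⟨d * (d / 2), ?_⟩ ⟨S, hS, hcard⟩
    rintro k ⟨T, hT, rfl⟩
    exact torus_indep_card_le d hd T hT

/-- The independence number of the torus graph: `α(T_{2t+1}) = t(2t+1)` and
`α(T_{2t}) = 2t²`. -/
theorem indepNum_torus (t : ℕ) (ht : 1 ≤ t) :
    indepNum (torus (2 * t + 1)) = t * (2 * t + 1) ∧
    indepNum (torus (2 * t)) = 2 * t ^ 2 := by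
  constructor
  · rw [indepNum_torus_eq (2 * t + 1) (by omega)]
    have h : (2 * t + 1) / 2 = t := by omega
    rw [h]; ring
  · rw [indepNum_torus_eq (2 * t) (by omega)]
    have h : (2 * t) / 2 = t := by omega
    rw [h]; ring

end
end
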